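/- Let X_{1,2} be the n×n lower-triangular Toeplitz matrix with 1 on the diagonal and 2 on every subdiagonal. Then the spectral norm of X_{1,2} equals cot(π/(4n)). -/

import Mathlib

open scoped Matrix.Norms.L2Operator
open Finset

noncomputable def Xmat (n : ℕ) (r beta : ℝ) : Matrix (Fin n) (Fin n) ℝ :=
  Matrix.of fun i j =>
    if (i : ℕ) < (j : ℕ) then 0
    else if i = j then r ^ (n - 1)
    else beta * r ^ (n - ((i : ℕ) - (j : ℕ) + 1))

noncomputable def sv (n k : ℕ) : ℝ := Real.sin (k * (Real.pi / (2 * n)))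

noncomputable def Gv (n k : ℕ) : ℝ :=
  if k = 0 then 0 else sv n (k + 1) / sv n k - Real.cos (Real.pi / (2 * n))

lemma sv_pos {n k : ℕ} (hn : 1 ≤ n) (h1 : 1 ≤ k) (h2 : k ≤ n) : 0 < sv n k := by
  have hn0 : (0:ℝ) < n := by exact_mod_cast hn
  have hk0 : (0:ℝ) < k := by exact_mod_cast h1
  have hkn : (k:ℝ) ≤ n := by exact_mod_cast h2
  have hpos : 0 < (k:ℝ) * (Real.pi / (2 * n)) := by positivity
  have hle : (k:ℝ) * (Real.pi / (2 * n)) ≤ (n:ℝ) * (Real.pi / (2 * n)) := by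
    have : (0:ℝ) ≤ Real.pi / (2 * n) := by positivity
    exact mul_le_mul_of_nonneg_right hkn this
  have heq : (n:ℝ) * (Real.pi / (2 * n)) = Real.pi / 2 := by field_simp
  have hlt : (k:ℝ) * (Real.pi / (2 * n)) < Real.pi := by
    calc (k:ℝ) * (Real.pi / (2 * n)) ≤ Real.pi / 2 := heq ▸ hle
    _ < Real.pi := by linarith [Real.pi_pos]
  exact Real.sin_pos_of_pos_of_lt_pi hpos hlt

lemma sv_zero (n : ℕ) : sv n 0 = 0 := by simp [sv]

lemma sv_rec (n k : ℕ) :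
    sv n (k + 2) + sv n k = 2 * Real.cos (Real.pi / (2 * n)) * sv n (k + 1) := by
  unfold sv
  have h1 : ((k:ℝ) + 2) * (Real.pi / (2 * n)) =
      ((k:ℝ) + 1) * (Real.pi / (2 * n)) + Real.pi / (2 * n) := by ring
  have h2 : (k:ℝ) * (Real.pi / (2 * n)) =
      ((k:ℝ) + 1) * (Real.pi / (2 * n)) - Real.pi / (2 * n) := by ring
  push_cast
  rw [h1, h2, Real.sin_add, Real.sin_sub]
  ring

lemma sv_n {n : ℕ} (hn : 1 ≤ n) : sv n n = 1 := by
  have hn0 : (n:ℝ) ≠ 0 := by exact_mod_cast Nat.one_le_iff_ne_zero.mp hn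
  have : (n:ℝ) * (Real.pi / (2 * n)) = Real.pi / 2 := by field_simp
  rw [sv, this, Real.sin_pi_div_two]

lemma sv_n1 {n : ℕ} (hn : 1 ≤ n) : sv n (n + 1) = Real.cos (Real.pi / (2 * n)) := by
  have hn0 : (n:ℝ) ≠ 0 := by exact_mod_cast Nat.one_le_iff_ne_zero.mp hn
  have : ((n:ℝ) + 1) * (Real.pi / (2 * n)) = Real.pi / 2 + Real.pi / (2 * n) := by
    field_simp
  rw [sv]
  push_cast
  rw [this, Real.sin_add]
  simp

lemma Gv_n {n : ℕ} (hn : 1 ≤ n) : Gv n n = 0 := by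
  have hne : n ≠ 0 := Nat.one_le_iff_ne_zero.mp hn
  rw [Gv, if_neg hne, sv_n hn, sv_n1 hn]
  simp

lemma Gv_one {n : ℕ} (hn : 1 ≤ n) : Gv n 1 = Real.cos (Real.pi / (2 * n)) := by
  have h2 : sv n 2 = 2 * Real.cos (Real.pi / (2 * n)) * sv n 1 := by
    have := sv_rec n 0
    rw [sv_zero] at this; linarith
  rw [Gv, if_neg one_ne_zero, h2]
  have h1 : sv n 1 ≠ 0 := (sv_pos hn le_rfl hn).ne'
  field_simp
  ring

/-- Core algebraic identity. -/
lemma core (n : ℕ) (hn : 1 ≤ n) (W : ℕ → ℝ) (h0 : W 0 = 0) :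
    Real.sin (Real.pi / (4 * n)) ^ 2 *
      ((Real.cot (Real.pi / (4 * n))) ^ 2 * ∑ k ∈ range n, (W (k + 1) - W k) ^ 2
        - ∑ k ∈ range n, (W (k + 1) + W k) ^ 2)
    = ∑ k ∈ range n,
        (Real.cos (Real.pi / (2 * n)) * (W (k + 1) ^ 2 + W k ^ 2) - 2 * W (k + 1) * W k
          - (Gv n (k + 1) * W (k + 1) ^ 2 - Gv n k * W k ^ 2)) := by
  have hn0 : (0:ℝ) < n := by exact_mod_cast hn
  have hn1 : (1:ℝ) ≤ n := by exact_mod_cast hn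
  set φ := Real.pi / (4 * (n:ℝ)) with hφ
  have hφpos : 0 < φ := by positivity
  have hφlt : φ < Real.pi := by
    rw [hφ]
    exact div_lt_self Real.pi_pos (by nlinarith)
  have hsφ : 0 < Real.sin φ := Real.sin_pos_of_pos_of_lt_pi hφpos hφlt
  have hθ : Real.pi / (2 * (n:ℝ)) = 2 * φ := by rw [hφ]; field_simp; ring
  have hterm : ∀ a b : ℝ,
      Real.sin φ ^ 2 * ((Real.cot φ) ^ 2 * (a - b) ^ 2 - (a + b) ^ 2)
        = Real.cos (2 * φ) * (a ^ 2 + b ^ 2) - 2 * a * b := by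
    intro a b
    rw [Real.cot_eq_cos_div_sin, Real.cos_two_mul, div_pow]
    have h1 : Real.sin φ ^ 2 ≠ 0 := by positivity
    field_simp
    nlinarith [Real.sin_sq_add_cos_sq φ]
  have htel : ∑ k ∈ range n, (Gv n (k + 1) * W (k + 1) ^ 2 - Gv n k * W k ^ 2) = 0 := by
    rw [Finset.sum_range_sub (fun k => Gv n k * W k ^ 2) n, Gv_n hn, h0]
    ring
  rw [hθ, Finset.sum_sub_distrib, htel, sub_zero]
  simp only [Finset.mul_sum]
  rw [← Finset.sum_sub_distrib, Finset.mul_sum]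
  exact Finset.sum_congr rfl fun k _ => hterm _ _

lemma D_eq {n k : ℕ} (hn : 1 ≤ n) (hk1 : 1 ≤ k) (hk : k < n) (a b : ℝ) :
    Real.cos (Real.pi / (2 * n)) * (a ^ 2 + b ^ 2) - 2 * a * b
      - (Gv n (k + 1) * a ^ 2 - Gv n k * b ^ 2)
    = (sv n k * a - sv n (k + 1) * b) ^ 2 / (sv n k * sv n (k + 1)) := by
  have hsk : 0 < sv n k := sv_pos hn hk1 hk.le
  have hsk1 : 0 < sv n (k + 1) := sv_pos hn (le_add_right hk1) hk
  have hrec := sv_rec n k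
  have hne : sv n k * sv n (k + 1) ≠ 0 := by positivity
  have hG1 : Gv n (k + 1) * sv n (k + 1)
      = sv n (k + 2) - Real.cos (Real.pi / (2 * n)) * sv n (k + 1) := by
    rw [Gv, if_neg (Nat.succ_ne_zero k)]
    field_simp
  have hG2 : Gv n k * sv n k
      = sv n (k + 1) - Real.cos (Real.pi / (2 * n)) * sv n k := by
    rw [Gv, if_neg (Nat.one_le_iff_ne_zero.mp hk1)]
    field_simp
  rw [eq_div_iff hne]
  linear_combination (-(a ^ 2) * sv n k) * hG1 + (b ^ 2 * sv n (k + 1)) * hG2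
    + (-(a ^ 2) * sv n k) * hrec


lemma sum_le (n : ℕ) (hn : 1 ≤ n) (W : ℕ → ℝ) (h0 : W 0 = 0) :
    ∑ k ∈ range n, (W (k + 1) + W k) ^ 2
      ≤ (Real.cot (Real.pi / (4 * n))) ^ 2 * ∑ k ∈ range n, (W (k + 1) - W k) ^ 2 := by
  have hn0 : (0:ℝ) < n := by exact_mod_cast hn
  have hcore := core n hn W h0
  have hD : 0 ≤ ∑ k ∈ range n,
      (Real.cos (Real.pi / (2 * n)) * (W (k + 1) ^ 2 + W k ^ 2) - 2 * W (k + 1) * W k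
        - (Gv n (k + 1) * W (k + 1) ^ 2 - Gv n k * W k ^ 2)) := by
    apply Finset.sum_nonneg
    intro k hk
    rw [Finset.mem_range] at hk
    rcases Nat.eq_zero_or_pos k with hk0 | hk1
    · subst hk0
      have : Real.cos (Real.pi / (2 * n)) * (W 1 ^ 2 + W 0 ^ 2) - 2 * W 1 * W 0
          - (Gv n 1 * W 1 ^ 2 - Gv n 0 * W 0 ^ 2) = 0 := by
        rw [h0, Gv_one hn, Gv]
        simp
      rw [this]
    · rw [D_eq hn hk1 hk]
      have hsk : 0 < sv n k := sv_pos hn hk1 hk.le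
      have hsk1 : 0 < sv n (k + 1) := sv_pos hn (le_add_right hk1) hk
      positivity
  rw [← hcore] at hD
  have hs2 : 0 < Real.sin (Real.pi / (4 * n)) ^ 2 := by
    have hφpos : 0 < Real.pi / (4 * (n:ℝ)) := by positivity
    have hn1 : (1:ℝ) ≤ n := by exact_mod_cast hn
    have hφlt : Real.pi / (4 * (n:ℝ)) < Real.pi := div_lt_self Real.pi_pos (by nlinarith)
    have := Real.sin_pos_of_pos_of_lt_pi hφpos hφlt
    positivity
  nlinarith [hD, hs2]

lemma sum_eq (n : ℕ) (hn : 1 ≤ n) :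
    ∑ k ∈ range n, (sv n (k + 1) + sv n k) ^ 2
      = (Real.cot (Real.pi / (4 * n))) ^ 2 * ∑ k ∈ range n, (sv n (k + 1) - sv n k) ^ 2 := by
  have hn0 : (0:ℝ) < n := by exact_mod_cast hn
  have hcore := core n hn (sv n) (sv_zero n)
  have hD : ∑ k ∈ range n,
      (Real.cos (Real.pi / (2 * n)) * (sv n (k + 1) ^ 2 + sv n k ^ 2)
        - 2 * sv n (k + 1) * sv n k
        - (Gv n (k + 1) * sv n (k + 1) ^ 2 - Gv n k * sv n k ^ 2)) = 0 := by
    apply Finset.sum_eq_zero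
    intro k hk
    rw [Finset.mem_range] at hk
    rcases Nat.eq_zero_or_pos k with hk0 | hk1
    · subst hk0
      rw [sv_zero, Gv_one hn, Gv]
      simp
    · rw [D_eq hn hk1 hk]
      have : sv n k * sv n (k + 1) - sv n (k + 1) * sv n k = 0 := by ring
      rw [this]
      simp
  rw [← hcore] at hD
  have hs2 : Real.sin (Real.pi / (4 * n)) ^ 2 ≠ 0 := by
    have hφpos : 0 < Real.pi / (4 * (n:ℝ)) := by positivity
    have hn1 : (1:ℝ) ≤ n := by exact_mod_cast hn
    have hφlt : Real.pi / (4 * (n:ℝ)) < Real.pi := div_lt_self Real.pi_pos (by nlinarith)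
    have := Real.sin_pos_of_pos_of_lt_pi hφpos hφlt
    positivity
  rcases mul_eq_zero.mp hD with h | h
  · exact absurd h hs2
  · linarith

noncomputable def Wof (n : ℕ) (v : Fin n → ℝ) (k : ℕ) : ℝ :=
  ∑ j ∈ range k, (if h : j < n then v ⟨j, h⟩ else 0)

lemma Wof_zero (n : ℕ) (v : Fin n → ℝ) : Wof n v 0 = 0 := by simp [Wof]

lemma Wof_diff (n : ℕ) (v : Fin n → ℝ) (i : Fin n) :
    v i = Wof n v (i + 1) - Wof n v i := by
  rw [Wof, Wof, Finset.sum_range_succ, dif_pos i.isLt]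
  simp

lemma Xmat_apply (n : ℕ) (i j : Fin n) :
    Xmat n 1 2 i j = if (i : ℕ) < (j : ℕ) then 0 else if i = j then 1 else 2 := by
  simp [Xmat]

lemma mulVec_Xmat (n : ℕ) (v : Fin n → ℝ) (i : Fin n) :
    (Xmat n 1 2).mulVec v i = Wof n v (i + 1) + Wof n v i := by
  have h1 : (Xmat n 1 2).mulVec v i = ∑ j : Fin n, (Xmat n 1 2) i j * v j := rfl
  have h2 : ∀ j : Fin n, (Xmat n 1 2) i j * v j
      = (fun jj : ℕ => (if (i:ℕ) < jj then 0 else if (i:ℕ) = jj then 1 else 2)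
          * (if h : jj < n then v ⟨jj, h⟩ else 0)) (j : ℕ) := by
    intro j
    rw [Xmat_apply]
    simp only [dif_pos j.isLt]
    congr 2
    · simp [Fin.ext_iff]
  rw [h1, Finset.sum_congr rfl (fun j _ => h2 j),
    Fin.sum_univ_eq_sum_range (fun jj : ℕ => (if (i:ℕ) < jj then 0 else if (i:ℕ) = jj then 1 else 2)
          * (if h : jj < n then v ⟨jj, h⟩ else 0)) n]
  set f : ℕ → ℝ := fun jj => (if (i:ℕ) < jj then 0 else if (i:ℕ) = jj then 1 else 2)
      * (if h : jj < n then v ⟨jj, h⟩ else 0) with hf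
  have hsub : ∑ jj ∈ range n, f jj = ∑ jj ∈ range ((i:ℕ) + 1), f jj := by
    refine (Finset.sum_subset ?_ ?_).symm
    · intro x hx
      rw [Finset.mem_range] at *
      exact lt_of_lt_of_le hx i.isLt
    · intro x _ hx
      rw [Finset.mem_range, not_lt] at hx
      rw [hf]
      simp only
      rw [if_pos (by omega : (i:ℕ) < x)]
      ring
  rw [hsub, Finset.sum_range_succ]
  have hfi : f i = if h : (i:ℕ) < n then v ⟨i, h⟩ else 0 := by
    rw [hf]; simp
  have hrest : ∑ jj ∈ range (i:ℕ), f jj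
      = ∑ jj ∈ range (i:ℕ), 2 * (if h : jj < n then v ⟨jj, h⟩ else 0) := by
    apply Finset.sum_congr rfl
    intro x hx
    rw [Finset.mem_range] at hx
    rw [hf]
    simp only
    rw [if_neg (by omega), if_neg (by omega)]
  rw [hfi, hrest, Wof, Wof, Finset.sum_range_succ]
  rw [← Finset.mul_sum]
  ring

lemma norm_eq_sqrt (n : ℕ) (y : EuclideanSpace ℝ (Fin n)) (g : ℕ → ℝ)
    (h : ∀ i : Fin n, y i = g (i : ℕ)) :
    ‖y‖ = Real.sqrt (∑ k ∈ range n, (g k) ^ 2) := by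
  rw [EuclideanSpace.norm_eq]
  congr 1
  rw [← Fin.sum_univ_eq_sum_range (fun k => (g k) ^ 2) n]
  exact Finset.sum_congr rfl fun i _ => by rw [h i, Real.norm_eq_abs, sq_abs]

set_option maxHeartbeats 1000000 in
theorem stmt15 (n : ℕ) (hn : 1 ≤ n) :
    ‖Xmat n 1 2‖ = Real.cot (Real.pi / (4 * n)) := by
  have hn0 : (0:ℝ) < n := by exact_mod_cast hn
  have hn1 : (1:ℝ) ≤ n := by exact_mod_cast hn
  set c := Real.cot (Real.pi / (4 * n)) with hc
  have hφpos : 0 < Real.pi / (4 * (n:ℝ)) := by positivity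
  have hφle : Real.pi / (4 * (n:ℝ)) ≤ Real.pi / 4 := by
    rw [div_le_div_iff₀ (by positivity) (by norm_num)]
    nlinarith [Real.pi_pos]
  have hsin : 0 < Real.sin (Real.pi / (4 * n)) :=
    Real.sin_pos_of_pos_of_lt_pi hφpos (by linarith [Real.pi_pos])
  have hcos : 0 < Real.cos (Real.pi / (4 * n)) :=
    Real.cos_pos_of_mem_Ioo ⟨by linarith [Real.pi_pos], by linarith [Real.pi_pos]⟩
  have hc0 : 0 < c := by rw [hc, Real.cot_eq_cos_div_sin]; positivity
  rw [Matrix.l2_opNorm_def]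
  have happ : ∀ (w : EuclideanSpace ℝ (Fin n)) (i : Fin n),
      ((Matrix.toEuclideanLin.trans LinearMap.toContinuousLinearMap) (Xmat n 1 2)) w i
        = (Xmat n 1 2).mulVec w i := fun w i => rfl
  apply le_antisymm
  · refine ContinuousLinearMap.opNorm_le_bound _ hc0.le fun v => ?_
    have hy : ∀ i : Fin n,
        ((Matrix.toEuclideanLin.trans LinearMap.toContinuousLinearMap) (Xmat n 1 2)) v i
          = Wof n v ((i : ℕ) + 1) + Wof n v (i : ℕ) := fun i => by
      rw [happ, mulVec_Xmat]
    have hv : ∀ i : Fin n, v i = Wof n v ((i : ℕ) + 1) - Wof n v (i : ℕ) := fun i =>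
      Wof_diff n v i
    rw [norm_eq_sqrt n _ (fun k => Wof n v (k + 1) + Wof n v k) hy,
        norm_eq_sqrt n v (fun k => Wof n v (k + 1) - Wof n v k) hv]
    have hle := sum_le n hn (Wof n v) (Wof_zero n v)
    calc Real.sqrt (∑ k ∈ range n, (Wof n v (k + 1) + Wof n v k) ^ 2)
        ≤ Real.sqrt (c ^ 2 * ∑ k ∈ range n, (Wof n v (k + 1) - Wof n v k) ^ 2) :=
          Real.sqrt_le_sqrt hle
      _ = c * Real.sqrt (∑ k ∈ range n, (Wof n v (k + 1) - Wof n v k) ^ 2) := by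
          rw [Real.sqrt_mul (sq_nonneg c), Real.sqrt_sq hc0.le]
  · set x : EuclideanSpace ℝ (Fin n) :=
      (WithLp.equiv 2 (Fin n → ℝ)).symm (fun i : Fin n => sv n ((i : ℕ) + 1) - sv n (i : ℕ))
      with hxdef
    have hxi : ∀ i : Fin n, x i = sv n ((i : ℕ) + 1) - sv n (i : ℕ) := fun i => rfl
    have hWx : ∀ k, k ≤ n → Wof n x k = sv n k := by
      intro k hk
      rw [Wof]
      have hcg : ∀ j ∈ range k, (if h : j < n then x ⟨j, h⟩ else 0)
          = sv n (j + 1) - sv n j := by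
        intro j hj
        rw [Finset.mem_range] at hj
        rw [dif_pos (lt_of_lt_of_le hj hk)]
        exact hxi ⟨j, lt_of_lt_of_le hj hk⟩
      rw [Finset.sum_congr rfl hcg, Finset.sum_range_sub (sv n) k, sv_zero, sub_zero]
    have hnx : ‖x‖ = Real.sqrt (∑ k ∈ range n, (sv n (k + 1) - sv n k) ^ 2) :=
      norm_eq_sqrt n x (fun k => sv n (k + 1) - sv n k) hxi
    have hxpos : 0 < ‖x‖ := by
      rw [hnx]
      apply Real.sqrt_pos.mpr
      apply Finset.sum_pos' (fun k _ => sq_nonneg _)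
      refine ⟨0, Finset.mem_range.mpr (by omega), ?_⟩
      have h1 : 0 < sv n 1 := sv_pos hn le_rfl hn
      simp only [sv_zero, Nat.zero_add, zero_add, sub_zero]
      positivity
    have hy : ∀ i : Fin n,
        ((Matrix.toEuclideanLin.trans LinearMap.toContinuousLinearMap) (Xmat n 1 2)) x i
          = sv n ((i : ℕ) + 1) + sv n (i : ℕ) := fun i => by
      rw [happ, mulVec_Xmat, hWx ((i : ℕ) + 1) i.isLt, hWx (i : ℕ) (le_of_lt i.isLt)]
    have hAx : ‖((Matrix.toEuclideanLin.trans LinearMap.toContinuousLinearMap) (Xmat n 1 2)) x‖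
        = c * ‖x‖ := by
      rw [norm_eq_sqrt n _ (fun k => sv n (k + 1) + sv n k) hy, hnx, sum_eq n hn,
        Real.sqrt_mul (sq_nonneg c), Real.sqrt_sq hc0.le]
    have hle := ContinuousLinearMap.le_opNorm
      ((Matrix.toEuclideanLin.trans LinearMap.toContinuousLinearMap) (Xmat n 1 2)) x
    rw [hAx] at hle
    exact le_of_mul_le_mul_right hle hxpos
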